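/- arXiv:2007.07398 — 5 statements merged into one kernel-verified Lean document; each statement's English description precedes it below -/
import Mathlib

section
/- Let d be an even positive integer, ω = exp(2πi/(2d)), and let F be the 2d×2d Fourier matrix F_{j,k} = ω^{jk}/√(2d). Define ℓ ∈ {0,1}^d by ℓ_j = 0 for j < d/2 and ℓ_j = 1 for j ≥ d/2, and let M be the d×d matrix with M_{j,k} = F_{2j+ℓ_j, 2k+ℓ_k}. Then rank(M) = d. -/
open Complex Matrix

theorem fourier_even_case_submatrix_full_rank (d : ℕ) (hd : 0 < d) (heven : Even d)
    (ω : ℂ) (hω : ω = Complex.exp (2 * Real.pi * Complex.I / (2 * d)))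
    (F : Matrix (Fin (2 * d)) (Fin (2 * d)) ℂ)
    (hF : ∀ j k, F j k = ω ^ (j.val * k.val) / (Real.sqrt (2 * d) : ℂ))
    (ℓ : Fin d → ℕ) (hℓ : ∀ j, ℓ j = if j.val < d / 2 then 0 else 1)
    (M : Matrix (Fin d) (Fin d) ℂ)
    (hM : ∀ j k, M j k =
      F ⟨2 * j.val + ℓ j, by have := j.isLt; rw [hℓ]; split <;> omega⟩
        ⟨2 * k.val + ℓ k, by have := k.isLt; rw [hℓ]; split <;> omega⟩) :
    M.rank = d := by
  obtain ⟨e, he⟩ := heven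
  have h2d : (2 * d : ℕ) ≠ 0 := by omega
  have hprim : IsPrimitiveRoot ω (2 * d) := by
    rw [hω]
    have := Complex.isPrimitiveRoot_exp (2 * d) h2d
    convert this using 3
    push_cast; ring
  have hone : ω ^ (2 * d) = 1 := hprim.pow_eq_one
  have hkey : ∀ a : ℕ, ω ^ a = ω ^ (a % (2 * d)) := by
    intro a
    conv_lhs => rw [← Nat.div_add_mod a (2 * d)]
    rw [pow_add, pow_mul, hone, one_pow, one_mul]
  have hmod : ∀ a b : ℕ, a % (2 * d) = b % (2 * d) → ω ^ a = ω ^ b := by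
    intro a b hab
    rw [hkey a, hkey b, hab]
  have hr : ∀ j : Fin d, (if j.val < e then 2 * j.val else 2 * j.val + 1 - d) < d := by
    intro j; have := j.isLt; split <;> omega
  set f : Fin d → Fin d := fun j => ⟨if j.val < e then 2 * j.val else 2 * j.val + 1 - d, hr j⟩
    with hfdef
  have hfinj : Function.Injective f := by
    intro j k hjk
    have h1 : (f j).val = (f k).val := congrArg Fin.val hjk
    simp only [hfdef] at h1
    have hj := j.isLt; have hk := k.isLt
    have : j.val = k.val := by split at h1 <;> split at h1 <;> omega
    exact Fin.ext this
  set σ : Fin d ≃ Fin d := Equiv.ofBijective f ((Finite.injective_iff_bijective).mp hfinj)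
    with hσdef
  have hMentry : ∀ j k : Fin d,
      M j k = ω ^ ((f j).val * (f k).val) / (Real.sqrt (2 * d) : ℂ) := by
    intro j k
    rw [hM, hF]
    congr 1
    apply hmod
    have hj := j.isLt; have hk := k.isLt
    show (2 * j.val + ℓ j) * (2 * k.val + ℓ k) % (2 * d) =
      (if j.val < e then 2 * j.val else 2 * j.val + 1 - d) *
        (if k.val < e then 2 * k.val else 2 * k.val + 1 - d) % (2 * d)
    rw [hℓ j, hℓ k]
    rcases Nat.lt_or_ge j.val e with hje | hje <;>
      rcases Nat.lt_or_ge k.val e with hke | hke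
    · rw [if_pos (show j.val < d / 2 by omega), if_pos (show k.val < d / 2 by omega),
        if_pos hje, if_pos hke]
      simp
    · rw [if_pos (show j.val < d / 2 by omega), if_neg (show ¬ k.val < d / 2 by omega),
        if_pos hje, if_neg (by omega)]
      obtain ⟨q, hq⟩ : ∃ q, 2 * k.val + 1 - d = q := ⟨_, rfl⟩
      have hq' : 2 * k.val + 1 = q + d := by omega
      rw [hq, hq']
      have hkey : (2 * j.val + 0) * (q + d) = 2 * j.val * q + j.val * (2 * d) := by ring
      rw [hkey, Nat.add_mul_mod_self_right]
    · rw [if_neg (show ¬ j.val < d / 2 by omega), if_pos (show k.val < d / 2 by omega),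
        if_neg (by omega), if_pos hke]
      obtain ⟨p, hp⟩ : ∃ p, 2 * j.val + 1 - d = p := ⟨_, rfl⟩
      have hp' : 2 * j.val + 1 = p + d := by omega
      rw [hp, hp']
      have hkey : (p + d) * (2 * k.val + 0) = p * (2 * k.val) + k.val * (2 * d) := by ring
      rw [hkey, Nat.add_mul_mod_self_right]
    · rw [if_neg (show ¬ j.val < d / 2 by omega), if_neg (show ¬ k.val < d / 2 by omega),
        if_neg (by omega), if_neg (by omega)]
      obtain ⟨p, hp⟩ : ∃ p, 2 * j.val + 1 - d = p := ⟨_, rfl⟩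
      obtain ⟨q, hq⟩ : ∃ q, 2 * k.val + 1 - d = q := ⟨_, rfl⟩
      have hp' : 2 * j.val + 1 = p + d := by omega
      have hq' : 2 * k.val + 1 = q + d := by omega
      obtain ⟨t, ht⟩ : ∃ t, j.val + k.val + 1 - e = t := ⟨_, rfl⟩
      have h2 : p + q + d = 2 * t := by omega
      rw [hp, hq, hp', hq']
      have hkey : (p + d) * (q + d) = p * q + t * (2 * d) := by
        calc (p + d) * (q + d) = p * q + (p + q + d) * d := by ring
        _ = p * q + t * (2 * d) := by rw [h2]; ring
      rw [hkey, Nat.add_mul_mod_self_right]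
  set v : Fin d → ℂ := fun m => ω ^ m.val with hvdef
  have hvinj : Function.Injective v := by
    intro a b hab
    have := hprim.pow_inj (by omega : a.val < 2 * d) (by omega : b.val < 2 * d) hab
    exact Fin.ext this
  have hMeq : M = (Real.sqrt (2 * d) : ℂ)⁻¹ • (Matrix.vandermonde v).submatrix σ σ := by
    ext j k
    rw [hMentry j k]
    have hσ : ∀ x, σ x = f x := fun x => rfl
    simp only [Matrix.smul_apply, Matrix.submatrix_apply, Matrix.vandermonde_apply, hσ, hvdef,
      smul_eq_mul, ← pow_mul]
    ring
  have hc : (Real.sqrt (2 * d) : ℂ) ≠ 0 := by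
    have hdpos : (0 : ℝ) < d := by exact_mod_cast hd
    exact Complex.ofReal_ne_zero.mpr (Real.sqrt_ne_zero'.mpr (by linarith))
  have hdet : M.det ≠ 0 := by
    rw [hMeq, Matrix.det_smul, Matrix.det_submatrix_equiv_self]
    exact mul_ne_zero (pow_ne_zero _ (inv_ne_zero hc))
      (Matrix.det_vandermonde_ne_zero_iff.mpr hvinj)
  have hunit : IsUnit M := by
    rw [Matrix.isUnit_iff_isUnit_det]
    exact hdet.isUnit
  rw [Matrix.rank_of_isUnit M hunit, Fintype.card_fin]
end

section
/- Let d be a positive integer, ω = exp(2πi/(2d)), and C_d the Fourier coin: C_d has (j,k)-entry ω^{jk}/√(2d). Then for every ℓ ∈ {0,1}^d with ℓ = (0,...,0) if d odd, or ℓ = (0,...,0,1,...,1) (d/2 zeros then d/2 ones) if d even, the submatrix C_d^{(ℓ)} with entries (C_d)_{2j+ℓ_j,2k+ℓ_k} is invertible. In particular, there exists ℓ ∈ {0,1}^d with rank(C_d^{(ℓ)}) = d. -/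
open Complex Matrix

private noncomputable def pv {n : ℕ} (v : Fin n → ℂ) : Polynomial ℂ :=
  ∑ k : Fin n, Polynomial.C (v k) * Polynomial.X ^ (k : ℕ)

private lemma pv_coeff {n : ℕ} (v : Fin n → ℂ) (k : Fin n) :
    (pv v).coeff (k : ℕ) = v k := by
  rw [pv, Polynomial.finset_sum_coeff, Finset.sum_eq_single k]
  · simp
  · intro b _ hb
    rw [Polynomial.coeff_C_mul, Polynomial.coeff_X_pow, if_neg, mul_zero]
    exact fun h => hb (Fin.val_injective h.symm)
  · simp

private lemma pv_natDegree {n : ℕ} (v : Fin n → ℂ) :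
    (pv v).natDegree ≤ n - 1 := by
  apply Polynomial.natDegree_sum_le_of_forall_le
  intro i _
  refine (Polynomial.natDegree_C_mul_le _ _).trans ?_
  rw [Polynomial.natDegree_X_pow]
  omega

private lemma pv_eval {n : ℕ} (v : Fin n → ℂ) (x : ℂ) :
    (pv v).eval x = ∑ k : Fin n, v k * x ^ (k : ℕ) := by
  rw [pv, Polynomial.eval_finset_sum]; simp

theorem fourier_coin_exists_full_rank_submatrix (d : ℕ) (hd : 0 < d)
    (ω : ℂ) (hω : ω = Complex.exp (2 * Real.pi * Complex.I / (2 * d)))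
    (C : Matrix (Fin (2 * d)) (Fin (2 * d)) ℂ)
    (hC : ∀ j k, C j k = ω ^ (j.val * k.val) / (Real.sqrt (2 * d) : ℂ))
    (ℓ : Fin d → Fin 2)
    (hℓ : ∀ j, ℓ j = if Odd d then 0 else (if j.val < d / 2 then 0 else 1))
    (idx : Fin d → Fin (2 * d))
    (hidx : ∀ j, idx j = ⟨2 * j.val + (ℓ j).val, by have := j.isLt; have := (ℓ j).isLt; omega⟩) :
    IsUnit (Matrix.of fun j k : Fin d => C (idx j) (idx k)) ∧
    ∃ ℓ' : Fin d → Fin 2,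
      (Matrix.of fun j k : Fin d => C
        ⟨2 * j.val + (ℓ' j).val, by have := j.isLt; have := (ℓ' j).isLt; omega⟩
        ⟨2 * k.val + (ℓ' k).val, by have := k.isLt; have := (ℓ' k).isLt; omega⟩).rank = d := by
  classical
  have h2d : (2 * d : ℕ) ≠ 0 := by omega
  have hsne : ((Real.sqrt (2 * d) : ℝ) : ℂ) ≠ 0 := by
    have hdr : (0:ℝ) < (d:ℝ) := by exact_mod_cast hd
    exact Complex.ofReal_ne_zero.mpr (Real.sqrt_pos.mpr (by linarith)).ne'
  have hprim : IsPrimitiveRoot ω (2 * d) := by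
    have h := Complex.isPrimitiveRoot_exp (2 * d) h2d
    rw [hω]
    convert h using 3
    push_cast
    ring
  have key : IsUnit (Matrix.of fun j k : Fin d => C (idx j) (idx k)) := by
    rw [Matrix.isUnit_iff_isUnit_det, isUnit_iff_ne_zero]
    intro hdet
    obtain ⟨v, hv0, hv⟩ := Matrix.exists_mulVec_eq_zero_iff.mpr hdet
    apply hv0
    have heq : ∀ j : Fin d,
        ∑ k : Fin d, v k * ω ^ ((2 * j.1 + (ℓ j).1) * (2 * k.1 + (ℓ k).1)) = 0 := by
      intro j
      have h1 : ((Matrix.of fun j k : Fin d => C (idx j) (idx k)) *ᵥ v) j = 0 :=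
        congrFun hv j
      rw [Matrix.mulVec, dotProduct] at h1
      simp only [Matrix.of_apply, hC, hidx] at h1
      have h2 : ∑ k : Fin d,
          v k * ω ^ ((2 * j.1 + (ℓ j).1) * (2 * k.1 + (ℓ k).1))
          = (∑ k : Fin d, ω ^ ((2 * j.1 + (ℓ j).1) * (2 * k.1 + (ℓ k).1))
              / ((Real.sqrt (2 * d) : ℝ) : ℂ) * v k) * ((Real.sqrt (2 * d) : ℝ) : ℂ) := by
        rw [Finset.sum_mul]
        refine Finset.sum_congr rfl fun k _ => ?_
        rw [div_mul_eq_mul_div, div_mul_cancel₀ _ hsne]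
        ring
      rw [h2, h1, zero_mul]
    by_cases hodd : Odd d
    · -- odd case
      have hℓ0 : ∀ j, (ℓ j).1 = 0 := fun j => by rw [hℓ j, if_pos hodd]; rfl
      have hξ : IsPrimitiveRoot (ω ^ 2) d := IsPrimitiveRoot.pow (by omega) hprim rfl
      have hη : IsPrimitiveRoot ((ω ^ 2) ^ 2) d :=
        hξ.pow_of_coprime 2 hodd.coprime_two_left
      set η : ℂ := (ω ^ 2) ^ 2 with hηdef
      have hinj : Function.Injective (fun j : Fin d => η ^ (j : ℕ)) := by
        intro j j' h
        exact Fin.val_injective (hη.pow_inj j.isLt j'.isLt h)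
      have heval : ∀ j : Fin d, (pv v).eval (η ^ (j : ℕ)) = 0 := by
        intro j
        rw [pv_eval]
        have h0 := heq j
        simp only [hℓ0, add_zero] at h0
        refine (Finset.sum_congr rfl fun k _ => ?_).trans h0
        congr 1
        simp only [hηdef, ← pow_mul]
        congr 1
        ring
      have hP : pv v = 0 := by
        apply Polynomial.eq_zero_of_natDegree_lt_card_of_eval_eq_zero _ hinj heval
        rw [Fintype.card_fin]
        have := pv_natDegree v
        omega
      funext k
      have hc := pv_coeff v k
      rw [hP] at hc
      simpa using hc.symm
    · -- even case
      have hev : Even d := Nat.not_odd_iff_even.mp hodd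
      obtain ⟨m, rfl⟩ := hev
      have hm : 0 < m := by omega
      have hℓval : ∀ j : Fin (m + m), (ℓ j).1 = if j.1 < m then 0 else 1 := by
        intro j
        rw [hℓ j, if_neg hodd]
        have h2 : (m + m) / 2 = m := by omega
        rw [h2]
        split <;> rfl
      have hξ : IsPrimitiveRoot (ω ^ 2) (m + m) := IsPrimitiveRoot.pow (by omega) hprim rfl
      set ξ : ℂ := ω ^ 2 with hξdef
      set a : Fin (m + m) → ℕ := fun j => 2 * j.1 + (if j.1 < m then 0 else 1) with hadef
      set b : Fin (m + m) → ℕ :=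
        fun j => if j.1 < m then 2 * j.1 else 2 * j.1 + 1 - (m + m) with hbdef
      set y : Fin (m + m) → ℂ := fun j => ξ ^ b j with hydef
      set z : Fin (m + m) → ℂ := fun j => ω ^ a j with hzdef
      have ha : ∀ j, a j = 2 * j.1 + (if j.1 < m then 0 else 1) := fun _ => rfl
      have hb : ∀ j, b j = if j.1 < m then 2 * j.1 else 2 * j.1 + 1 - (m + m) := fun _ => rfl
      have hy : ∀ j, y j = ξ ^ b j := fun _ => rfl
      have hz : ∀ j, z j = ω ^ a j := fun _ => rfl
      have hℓa : ∀ j : Fin (m + m), 2 * j.1 + (ℓ j).1 = a j := by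
        intro j
        rw [hℓval j, ha j]
      have heq' : ∀ j : Fin (m + m), ∑ k : Fin (m + m), v k * ω ^ (a j * a k) = 0 := by
        intro j
        have h0 := heq j
        simp only [hℓa] at h0
        exact h0
      have hblt : ∀ j, b j < m + m := by
        intro j
        have := j.isLt
        rw [hb j]
        split <;> omega
      have hba : ∀ j, ξ ^ a j = y j := by
        intro j
        have hj := j.isLt
        rw [hy j, ha j, hb j]
        by_cases h : j.1 < m
        · simp [h]
        · rw [if_neg h, if_neg h]
          have h1 : 2 * j.1 + 1 - (m + m) + (m + m) = 2 * j.1 + 1 := by omega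
          calc ξ ^ (2 * j.1 + 1) = ξ ^ (2 * j.1 + 1 - (m + m)) * ξ ^ (m + m) := by
                rw [← pow_add, h1]
            _ = ξ ^ (2 * j.1 + 1 - (m + m)) := by rw [hξ.pow_eq_one, mul_one]
      have hz2 : ∀ j, z j ^ 2 = y j := by
        intro j
        rw [← hba j, hz j, hξdef, ← pow_mul, ← pow_mul]
        congr 1
        ring
      have hy1 : ∀ j, y j ^ (m + m) = 1 := by
        intro j
        rw [hy j, ← pow_mul, mul_comm, pow_mul, hξ.pow_eq_one, one_pow]
      have hyinj : Function.Injective y := by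
        intro j j' h
        have hbe : b j = b j' := hξ.pow_inj (hblt j) (hblt j') h
        have hj := j.isLt
        have hj' := j'.isLt
        rw [hb j, hb j'] at hbe
        apply Fin.val_injective
        split at hbe <;> split at hbe <;> omega
      have haL : ∀ k : Fin m, a (Fin.castAdd m k) = 2 * k.1 := by
        intro k
        rw [ha]
        have h1 : (Fin.castAdd m k).1 = k.1 := rfl
        rw [h1, if_pos k.isLt, add_zero]
      have haR : ∀ k : Fin m, a (Fin.natAdd m k) = 2 * (m + k.1) + 1 := by
        intro k
        rw [ha]
        have h1 : (Fin.natAdd m k).1 = m + k.1 := rfl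
        rw [h1, if_neg (by omega)]
      set vL : Fin m → ℂ := fun k => v (Fin.castAdd m k) with hvL
      set vR : Fin m → ℂ := fun k => v (Fin.natAdd m k) with hvR
      set P := pv vL with hPdef
      set Q := pv vR with hQdef
      have heq2 : ∀ j : Fin (m + m),
          P.eval (y j) + z j * (y j) ^ m * Q.eval (y j) = 0 := by
        intro j
        have h0 := heq' j
        rw [Fin.sum_univ_add] at h0
        have e1 : (∑ k : Fin m, vL k * y j ^ (k : ℕ))
            = ∑ k : Fin m, v (Fin.castAdd m k) * ω ^ (a j * a (Fin.castAdd m k)) := by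
          refine Finset.sum_congr rfl fun k _ => ?_
          have h2 : ω ^ (a j * a (Fin.castAdd m k)) = y j ^ (k : ℕ) := by
            rw [haL k, ← hba j, hξdef, ← pow_mul, ← pow_mul]
            congr 1
            ring
          rw [h2]
        have e2 : (∑ k : Fin m, z j * y j ^ m * (vR k * y j ^ (k : ℕ)))
            = ∑ k : Fin m, v (Fin.natAdd m k) * ω ^ (a j * a (Fin.natAdd m k)) := by
          refine Finset.sum_congr rfl fun k _ => ?_
          have h2 : ω ^ (a j * a (Fin.natAdd m k)) = z j * y j ^ m * y j ^ (k : ℕ) := by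
            rw [haR k, hz j, ← hba j, hξdef]
            simp only [← pow_mul, ← pow_add]
            congr 1
            ring
          rw [h2]
          ring
        rw [hPdef, hQdef, pv_eval, pv_eval, Finset.mul_sum, e1, e2]
        exact h0
      have hR : P ^ 2 - Polynomial.X * Q ^ 2 = 0 := by
        apply Polynomial.eq_zero_of_natDegree_lt_card_of_eval_eq_zero _ hyinj
        · intro j
          have h2 : P.eval (y j) = -(z j * y j ^ m * Q.eval (y j)) :=
            eq_neg_of_add_eq_zero_left (heq2 j)
          simp only [Polynomial.eval_sub, Polynomial.eval_mul, Polynomial.eval_pow,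
            Polynomial.eval_X]
          rw [h2]
          have h3 : (-(z j * y j ^ m * Q.eval (y j))) ^ 2
              = z j ^ 2 * (y j ^ m) ^ 2 * Q.eval (y j) ^ 2 := by ring
          have h4 : (y j ^ m) ^ 2 = 1 := by
            rw [← pow_mul, mul_two, hy1 j]
          rw [h3, hz2 j, h4]
          ring
        · rw [Fintype.card_fin]
          have hPd := pv_natDegree vL
          have hQd := pv_natDegree vR
          refine lt_of_le_of_lt (Polynomial.natDegree_sub_le _ _) ?_
          have h1 : (P ^ 2).natDegree ≤ 2 * (m - 1) := by
            rw [hPdef, Polynomial.natDegree_pow]; omega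
          have h2 : (Polynomial.X * Q ^ 2).natDegree ≤ 1 + 2 * (m - 1) := by
            refine (Polynomial.natDegree_mul_le).trans ?_
            rw [hQdef, Polynomial.natDegree_X, Polynomial.natDegree_pow]
            omega
          omega
      have hPQ : P ^ 2 = Polynomial.X * Q ^ 2 := sub_eq_zero.mp hR
      have hQ0 : Q = 0 := by
        by_contra hQ
        have hP0 : P ≠ 0 := by
          intro h
          rw [h] at hPQ
          have h5 : Polynomial.X * Q ^ 2 = 0 := by rw [← hPQ]; ring
          rcases mul_eq_zero.mp h5 with h' | h'
          · exact Polynomial.X_ne_zero h'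
          · exact hQ (pow_eq_zero_iff two_ne_zero |>.mp h')
        have hdeg := congrArg Polynomial.natDegree hPQ
        rw [Polynomial.natDegree_pow,
          Polynomial.natDegree_mul Polynomial.X_ne_zero (pow_ne_zero 2 hQ),
          Polynomial.natDegree_X, Polynomial.natDegree_pow] at hdeg
        omega
      have hP0 : P = 0 := by
        rw [hQ0] at hPQ
        have h5 : P ^ 2 = 0 := by rw [hPQ]; ring
        exact pow_eq_zero_iff two_ne_zero |>.mp h5
      funext k
      by_cases hk : k.1 < m
      · have hc := pv_coeff vL ⟨k.1, hk⟩
        rw [← hPdef, hP0] at hc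
        have h6 : v k = vL ⟨k.1, hk⟩ :=
          (congrArg v (show Fin.castAdd m ⟨k.1, hk⟩ = k from Fin.val_injective rfl)).symm
        rw [h6, ← hc]
        simp
      · have hk2 : k.1 - m < m := by have := k.isLt; omega
        have hc := pv_coeff vR ⟨k.1 - m, hk2⟩
        rw [← hQdef, hQ0] at hc
        have h6 : v k = vR ⟨k.1 - m, hk2⟩ :=
          (congrArg v (show Fin.natAdd m ⟨k.1 - m, hk2⟩ = k from
            Fin.val_injective (show m + (k.1 - m) = k.1 by omega))).symm
        rw [h6, ← hc]
        simp
  refine ⟨key, ℓ, ?_⟩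
  have hEq : (Matrix.of fun j k : Fin d => C
        ⟨2 * j.val + (ℓ j).val, by have := j.isLt; have := (ℓ j).isLt; omega⟩
        ⟨2 * k.val + (ℓ k).val, by have := k.isLt; have := (ℓ k).isLt; omega⟩)
      = Matrix.of fun j k : Fin d => C (idx j) (idx k) := by
    ext j k
    simp only [Matrix.of_apply]
    rw [hidx j, hidx k]
  rw [hEq, Matrix.rank_of_isUnit _ key, Fintype.card_fin]
end

section
/- For the 2D Grover walk, define U(k₁,k₂) = D(k₁,k₂)·C where D = diag(e^{ik₁}, e^{-ik₁}, e^{ik₂}, e^{-ik₂}) and C is the 4×4 Grover coin. Then for all (k₁,k₂) ∈ [0,2π)², the vector v(k₁,k₂) = (1/(2√2))·(1+e^{-ik₂}, e^{-ik₁}+e^{-ik₁-ik₂}, 1+e^{-ik₁}, e^{-ik₂}+e^{-ik₁-ik₂})ᵀ satisfies U(k₁,k₂)·v(k₁,k₂) = v(k₁,k₂). -/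
open Complex Matrix

set_option maxHeartbeats 1000000 in

theorem grover_walk_constant_eigenvector
    (C : Matrix (Fin 4) (Fin 4) ℂ)
    (hC : ∀ j k, C j k = if j = k then -(1 / 2) else 1 / 2)
    (U : ℝ → ℝ → Matrix (Fin 4) (Fin 4) ℂ)
    (hU : ∀ k₁ k₂, U k₁ k₂ =
      Matrix.diagonal ![Complex.exp (Complex.I * k₁), Complex.exp (-(Complex.I * k₁)),
        Complex.exp (Complex.I * k₂), Complex.exp (-(Complex.I * k₂))] * C)
    (v : ℝ → ℝ → Fin 4 → ℂ)
    (hv : ∀ k₁ k₂, v k₁ k₂ = (1 / (2 * Real.sqrt 2) : ℝ) •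
      ![1 + Complex.exp (-(Complex.I * k₂)),
        Complex.exp (-(Complex.I * k₁)) + Complex.exp (-(Complex.I * k₁) - Complex.I * k₂),
        1 + Complex.exp (-(Complex.I * k₁)),
        Complex.exp (-(Complex.I * k₂)) + Complex.exp (-(Complex.I * k₁) - Complex.I * k₂)]) :
    ∀ k₁ k₂ : ℝ, k₁ ∈ Set.Ico 0 (2 * Real.pi) → k₂ ∈ Set.Ico 0 (2 * Real.pi) →
      (U k₁ k₂).mulVec (v k₁ k₂) = v k₁ k₂ := by
  intro k₁ k₂ _ _
  have h1 : Complex.exp (Complex.I * k₁) * Complex.exp (-(Complex.I * k₁)) = 1 := by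
    rw [← Complex.exp_add]; simp
  have h2 : Complex.exp (Complex.I * k₂) * Complex.exp (-(Complex.I * k₂)) = 1 := by
    rw [← Complex.exp_add]; simp
  have h12 : Complex.exp (-(Complex.I * k₁) - Complex.I * k₂) =
      Complex.exp (-(Complex.I * k₁)) * Complex.exp (-(Complex.I * k₂)) := by
    rw [← Complex.exp_add]; ring_nf
  have e1 : Complex.exp (Complex.I * k₁) ≠ 0 := Complex.exp_ne_zero _
  have e2 : Complex.exp (Complex.I * k₂) ≠ 0 := Complex.exp_ne_zero _
  have hs : (Real.sqrt 2 : ℂ) ≠ 0 := by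
    simp [Complex.ofReal_ne_zero, Real.sqrt_ne_zero']
  rw [hU, hv]
  ext i
  fin_cases i
  all_goals
    simp only [Matrix.mulVec, Matrix.mul_apply, dotProduct, Fin.sum_univ_four, hC,
      Matrix.diagonal, Matrix.of_apply, Matrix.cons_val', Matrix.cons_val_zero,
      Matrix.cons_val_one, Matrix.head_cons, Matrix.cons_val_fin_one, Matrix.empty_val',
      Matrix.head_fin_const, Pi.smul_apply, Matrix.smul_cons, smul_eq_mul,
      Matrix.cons_val_two, Matrix.cons_val_three, Matrix.tail_cons, h12]
  all_goals simp (config := { decide := true }) [Fin.ext_iff]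
  · linear_combination ((Real.sqrt 2 : ℂ)⁻¹ * 2⁻¹ * (1 + Complex.exp (-(Complex.I * k₂)))) * h1
  · ring
  · linear_combination ((Real.sqrt 2 : ℂ)⁻¹ * 2⁻¹ * (1 + Complex.exp (-(Complex.I * k₁)))) * h2
  · ring
end

section
/- Define U(k₁,k₂) = D(k₁,k₂)·F₂ where D = diag(e^{ik₁}, e^{-ik₁}, e^{ik₂}, e^{-ik₂}) and F₂ is the 4×4 Fourier matrix with entries i^{jk}/2. Then there is no constant λ ∈ ℂ that is an eigenvalue of U(k₁,k₂) for all (k₁,k₂) ∈ [0,2π)². -/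
open Complex Matrix

set_option maxHeartbeats 2000000 in
theorem fourier_walk_2d_no_constant_eigenvalue
    (F : Matrix (Fin 4) (Fin 4) ℂ)
    (hF : ∀ j k, F j k = Complex.I ^ (j.val * k.val) / 2)
    (U : ℝ → ℝ → Matrix (Fin 4) (Fin 4) ℂ)
    (hU : ∀ k₁ k₂, U k₁ k₂ =
      Matrix.diagonal ![Complex.exp (Complex.I * k₁), Complex.exp (-(Complex.I * k₁)),
        Complex.exp (Complex.I * k₂), Complex.exp (-(Complex.I * k₂))] * F) :
    ¬ ∃ lam : ℂ, ∀ k₁ k₂ : ℝ, k₁ ∈ Set.Ico 0 (2 * Real.pi) → k₂ ∈ Set.Ico 0 (2 * Real.pi) →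
      ∃ v : Fin 4 → ℂ, v ≠ 0 ∧ (U k₁ k₂).mulVec v = lam • v := by
  rintro ⟨lam, h⟩
  have hpi := Real.pi_pos
  -- eigenvalue implies vanishing determinant
  have hdet : ∀ k₁ k₂ : ℝ, k₁ ∈ Set.Ico 0 (2 * Real.pi) → k₂ ∈ Set.Ico 0 (2 * Real.pi) →
      (U k₁ k₂ - lam • 1).det = 0 := by
    intro k₁ k₂ h1 h2
    obtain ⟨v, hv, hUv⟩ := h k₁ k₂ h1 h2
    rw [← Matrix.exists_mulVec_eq_zero_iff]
    exact ⟨v, hv, by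
      rw [Matrix.sub_mulVec, hUv, Matrix.smul_mulVec, Matrix.one_mulVec, sub_self]⟩
  -- explicit entries of the shifted matrix
  have entry : ∀ a b : ℂ, (Matrix.diagonal ![a, a⁻¹, b, b⁻¹] * F) - lam • 1 =
      !![a/2 - lam, a/2, a/2, a/2;
         a⁻¹/2, a⁻¹*I/2 - lam, -a⁻¹/2, -(a⁻¹*I)/2;
         b/2, -b/2, b/2 - lam, -b/2;
         b⁻¹/2, -(b⁻¹*I)/2, -b⁻¹/2, b⁻¹*I/2 - lam] := by
    intro a b
    have h3 : Complex.I ^ (3:ℕ) = -I := by simp [pow_succ, Complex.I_mul_I]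
    ext j k
    fin_cases j <;> fin_cases k <;>
      norm_num [Matrix.mul_apply, Fin.sum_univ_four, hF, Matrix.one_apply,
        Matrix.diagonal_apply, Fin.ext_iff, h3, pow_succ, Complex.I_mul_I,
        show ((3:Fin 4).val) = 3 from rfl, show ((2:Fin 4).val) = 2 from rfl] <;> ring
  have hUform : ∀ k₁ k₂ : ℝ, U k₁ k₂ - lam • 1 =
      !![Complex.exp (I*k₁)/2 - lam, Complex.exp (I*k₁)/2, Complex.exp (I*k₁)/2, Complex.exp (I*k₁)/2;
         (Complex.exp (I*k₁))⁻¹/2, (Complex.exp (I*k₁))⁻¹*I/2 - lam, -(Complex.exp (I*k₁))⁻¹/2, -((Complex.exp (I*k₁))⁻¹*I)/2;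
         Complex.exp (I*k₂)/2, -Complex.exp (I*k₂)/2, Complex.exp (I*k₂)/2 - lam, -Complex.exp (I*k₂)/2;
         (Complex.exp (I*k₂))⁻¹/2, -((Complex.exp (I*k₂))⁻¹*I)/2, -(Complex.exp (I*k₂))⁻¹/2, (Complex.exp (I*k₂))⁻¹*I/2 - lam] := by
    intro k₁ k₂
    rw [hU, Complex.exp_neg, Complex.exp_neg]
    exact entry _ _
  -- exponential values
  have e0 : Complex.exp (I * ((0:ℝ):ℂ)) = 1 := by norm_num
  have epi : Complex.exp (I * ((Real.pi:ℝ):ℂ)) = -1 := by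
    rw [mul_comm]; exact Complex.exp_pi_mul_I
  have epi2 : Complex.exp (I * ((Real.pi/2 : ℝ):ℂ)) = I := by
    rw [mul_comm, Complex.exp_mul_I, ← Complex.ofReal_cos, ← Complex.ofReal_sin,
      Real.cos_pi_div_two, Real.sin_pi_div_two]
    norm_num
  -- membership
  have m0 : (0:ℝ) ∈ Set.Ico 0 (2 * Real.pi) := ⟨le_refl _, by linarith⟩
  have mpi : Real.pi ∈ Set.Ico 0 (2 * Real.pi) := ⟨by linarith, by linarith⟩
  have mpi2 : Real.pi/2 ∈ Set.Ico 0 (2 * Real.pi) := ⟨by linarith, by linarith⟩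
  -- three determinant equations
  have hE0 : lam^4 - (1+I)*lam^3 + (-1+I)*lam^2 + (1+I)*lam - I = 0 := by
    have := hdet 0 0 m0 m0
    rw [hUform 0 0] at this
    rw [show ((0:ℝ):ℂ) = ((0:ℝ):ℂ) from rfl] at this
    simp only [e0, inv_one] at this
    rw [← this]
    simp [Matrix.det_succ_row_zero, Fin.sum_univ_succ, Fin.succAbove,
      show Fin.castSucc (2 : Fin 3) = (2 : Fin 4) from rfl]
    ring_nf
  have hE1 : lam^4 - (1+I)*lam^3 + ((-1+I)/2)*lam^2 + (1+I)*lam - I = 0 := by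
    have := hdet (Real.pi/2) 0 mpi2 m0
    rw [hUform (Real.pi/2) 0] at this
    simp only [e0, epi2, inv_one, Complex.inv_I] at this
    rw [← this]
    simp [Matrix.det_succ_row_zero, Fin.sum_univ_succ, Fin.succAbove,
      show Fin.castSucc (2 : Fin 3) = (2 : Fin 4) from rfl, Complex.I_sq]
    ring_nf
    simp only [show (I:ℂ)^3 = -I by simp [pow_succ, Complex.I_mul_I], Complex.I_sq]
    ring
  have hE2 : lam^4 - I = 0 := by
    have := hdet Real.pi 0 mpi m0
    rw [hUform Real.pi 0] at this
    simp only [e0, epi, inv_one, inv_neg, inv_one] at this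
    rw [← this]
    simp [Matrix.det_succ_row_zero, Fin.sum_univ_succ, Fin.succAbove,
      show Fin.castSucc (2 : Fin 3) = (2 : Fin 4) from rfl]
    ring_nf
  have hl : lam^2 = 0 := by linear_combination (-1-I)*hE0 - (-1-I)*hE1 + (lam^2/2) * Complex.I_sq
  have : (I:ℂ) = 0 := by linear_combination -hE2 + lam^2 * hl
  exact Complex.I_ne_zero this
end

section
/- Let H = (1/√2)·[[1,1],[1,-1]] be the Hadamard matrix and define U(k) = diag(e^{ik}, e^{-ik})·H for k ∈ [0,2π). Then there is no λ ∈ ℂ that is an eigenvalue of U(k) for every k ∈ [0,2π). -/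
open Complex Matrix

lemma det_zero_of_eig (M : Matrix (Fin 2) (Fin 2) ℂ) (lam : ℂ) (v : Fin 2 → ℂ)
    (hv : v ≠ 0) (h : M.mulVec v = lam • v) : (M - lam • 1).det = 0 := by
  rw [← Matrix.exists_mulVec_eq_zero_iff]
  exact ⟨v, hv, by simp [Matrix.sub_mulVec, h, Matrix.smul_mulVec, Matrix.one_mulVec]⟩

theorem hadamard_walk_no_constant_eigenvalue
    (H : Matrix (Fin 2) (Fin 2) ℂ)
    (hH : H = (1 / (Real.sqrt 2) : ℝ) • !![1, 1; 1, -1])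
    (U : ℝ → Matrix (Fin 2) (Fin 2) ℂ)
    (hU : ∀ k, U k =
      Matrix.diagonal ![Complex.exp (Complex.I * k), Complex.exp (-(Complex.I * k))] * H) :
    ¬ ∃ lam : ℂ, ∀ k : ℝ, k ∈ Set.Ico 0 (2 * Real.pi) →
      ∃ v : Fin 2 → ℂ, v ≠ 0 ∧ (U k).mulVec v = lam • v := by
  rintro ⟨lam, hlam⟩
  set s : ℂ := ((1 / Real.sqrt 2 : ℝ) : ℂ) with hs
  have hs2 : s * s = 1 / 2 := by
    have hr : (1 / Real.sqrt 2) * (1 / Real.sqrt 2) = 1 / 2 := by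
      rw [div_mul_div_comm, one_mul, Real.mul_self_sqrt (by norm_num)]
    rw [hs, ← Complex.ofReal_mul, hr]
    norm_num
  have hpi : Real.pi > 0 := Real.pi_pos
  -- k = 0
  obtain ⟨v0, hv0, he0⟩ := hlam 0 ⟨le_refl 0, by linarith⟩
  obtain ⟨v1, hv1, he1⟩ := hlam (Real.pi / 2) ⟨by linarith, by linarith⟩
  have hexp0 : Complex.exp (Complex.I * (0:ℝ)) = 1 := by simp
  have hexp1 : Complex.exp (Complex.I * ((Real.pi/2 : ℝ):ℂ)) = Complex.I := by
    rw [mul_comm, Complex.exp_mul_I, ← Complex.ofReal_cos, ← Complex.ofReal_sin]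
    simp [Real.cos_pi_div_two, Real.sin_pi_div_two]
  have hexp1' : Complex.exp (-(Complex.I * ((Real.pi/2 : ℝ):ℂ))) = -Complex.I := by
    rw [Complex.exp_neg, hexp1, Complex.inv_I]
  have hM0 : U 0 - lam • 1 = !![s - lam, s; s, -s - lam] := by
    rw [hU, hH]
    ext i j
    fin_cases i <;> fin_cases j <;>
      simp [Matrix.mul_apply, Fin.sum_univ_two, Matrix.diagonal, Matrix.one_apply, hs]
  have hM1 : U (Real.pi/2) - lam • 1 =
      !![Complex.I * s - lam, Complex.I * s; -Complex.I * s, Complex.I * s - lam] := by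
    rw [hU, hH, hexp1, hexp1']
    ext i j
    fin_cases i <;> fin_cases j <;>
      simp [Matrix.mul_apply, Fin.sum_univ_two, Matrix.diagonal, Matrix.one_apply, hs]
  have hd0 := det_zero_of_eig _ _ _ hv0 he0
  have hd1 := det_zero_of_eig _ _ _ hv1 he1
  rw [hM0, Matrix.det_fin_two_of] at hd0
  rw [hM1, Matrix.det_fin_two_of] at hd1
  -- hd0 : (s - lam) * (-s - lam) - s * s = 0  → lam^2 = 1
  have e0 : lam * lam = 1 := by
    linear_combination hd0 + 2 * hs2
  have e1 : lam * lam - 2 * Complex.I * s * lam + Complex.I * Complex.I * (s*s) * 2 = 0 := by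
    linear_combination hd1
  rw [hs2, Complex.I_mul_I, e0] at e1
  have hlam0 : lam = 0 := by
    have hsne : s ≠ 0 :=
      Complex.ofReal_ne_zero.mpr (by positivity)
    have h2 : 2 * Complex.I * s * lam = 0 := by linear_combination -e1
    have hne : (2 : ℂ) * Complex.I * s ≠ 0 := by
      simp [Complex.I_ne_zero, hsne]
    exact (mul_eq_zero.mp h2).resolve_left hne
  rw [hlam0] at e0
  norm_num at e0
end
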